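/- Let a be a prime number and p an integer such that p ≢ 0 (mod a), p ≢ −2a+1 (mod a²), and p ≢ −2a−1 (mod a²). Let λ(t) = a·t² − (2a+p)·t + a, let z ∈ ℂ be a zero of λ, and let c be a positive integer. Then there exists a sequence α = (α_i)_{i≥1} of nonzero reciprocal algebraic numbers in ℂ, indexed by the positive integers, satisfying (α_{ri})^r = α_i for all positive integers r and i, such that α_c = z. -/

import Mathlib

open Polynomial

/-- A nonzero algebraic number `z ∈ ℂ` is *reciprocal* if `z` and `z⁻¹` have the same
minimal polynomial over `ℚ`. -/
def IsReciprocalNum (z : ℂ) : Prop :=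
  z ≠ 0 ∧ IsAlgebraic ℚ z ∧ minpoly ℚ z = minpoly ℚ z⁻¹

/- Auxiliary: the sequence `S m` with `S m = x ^ m + x ^ (-m)` when `x + x⁻¹ = s`. -/
private def chb (s : ℚ) : ℕ → ℚ
  | 0 => 2
  | 1 => s
  | (n+2) => s * chb s (n+1) - chb s n

private lemma chb_spec (s : ℚ) (x : ℂ) (hx0 : x ≠ 0) (hxs : x + x⁻¹ = (s : ℂ)) :
    ∀ m : ℕ, ((chb s m : ℚ) : ℂ) = x ^ m + (x ^ m)⁻¹
  | 0 => by norm_num [chb]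
  | 1 => by simpa [chb] using hxs.symm
  | (n+2) => by
    have h1 := chb_spec s x hx0 hxs (n+1)
    have h2 := chb_spec s x hx0 hxs n
    have hxn : x ^ n ≠ 0 := pow_ne_zero _ hx0
    show ((s * chb s (n+1) - chb s n : ℚ) : ℂ) = _
    push_cast
    rw [h1, h2, ← hxs]
    field_simp
    ring

/-- No integer solutions under the congruence conditions. -/
private lemma int_no_sol (a : ℕ) (ha : a.Prime) (p u v : ℤ)
    (h1 : ¬ (p ≡ -2 * (a : ℤ) + 1 [ZMOD ((a : ℤ) ^ 2)]))
    (h2 : ¬ (p ≡ -2 * (a : ℤ) - 1 [ZMOD ((a : ℤ) ^ 2)]))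
    (hco : IsCoprime u v) (hdvd : (a:ℤ) ∣ u)
    (heq : (a:ℤ)*u^2 - (2*a+p)*u*v + (a:ℤ)*v^2 = 0) : False := by
  have hA : (a:ℤ) ≠ 0 := by exact_mod_cast ha.ne_zero
  have hAprime : Prime (a:ℤ) := Nat.prime_iff_prime_int.mp ha
  obtain ⟨u₁, rfl⟩ := hdvd
  have key : (a:ℤ)^2*u₁^2 - (2*a+p)*u₁*v + v^2 = 0 := by
    have h : (a:ℤ) * ((a:ℤ)^2*u₁^2 - (2*a+p)*u₁*v + v^2) = 0 := by linear_combination heq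
    rcases mul_eq_zero.mp h with h' | h'
    · exact absurd h' hA
    · exact h'
  have hco1 : IsCoprime u₁ v := hco.of_mul_left_right
  -- u₁ is a unit
  have hu₁v2 : u₁ ∣ v^2 := ⟨(2*a+p)*v - (a:ℤ)^2*u₁, by linear_combination key⟩
  have hu₁unit : IsUnit u₁ := (hco1.pow_right).isUnit_of_dvd' dvd_rfl hu₁v2
  -- a does not divide v
  have hAv : ¬ (a:ℤ) ∣ v := by
    intro hAv
    exact hAprime.not_unit (hco.isUnit_of_dvd' ⟨u₁, rfl⟩ hAv)
  have hcoAv : IsCoprime (a:ℤ) v := by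
    rw [Int.isCoprime_iff_gcd_eq_one]
    have hd : Int.gcd (a:ℤ) v ∣ a := by
      have h' : (Int.gcd (a:ℤ) v : ℤ) ∣ (a:ℤ) := Int.gcd_dvd_left _ _
      exact_mod_cast h'
    rcases (Nat.Prime.eq_one_or_self_of_dvd ha _ hd) with h | h
    · exact h
    · exfalso
      apply hAv
      have : (Int.gcd (a:ℤ) v : ℤ) ∣ v := Int.gcd_dvd_right _ _
      rw [h] at this
      exact_mod_cast this
  -- v is a unit
  have hva2 : v ∣ (a:ℤ)^2 * u₁^2 := ⟨(2*a+p)*u₁ - v, by linear_combination key⟩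
  have hva : v ∣ (a:ℤ)^2 := (hco1.symm.pow_right).dvd_of_dvd_mul_right hva2
  have hvunit : IsUnit v := (hcoAv.pow_left).symm.isUnit_of_dvd' dvd_rfl hva
  rcases Int.isUnit_iff.mp hu₁unit with hu | hu <;>
    rcases Int.isUnit_iff.mp hvunit with hv | hv <;>
      subst hu <;> subst hv
  · exact h1 ((Int.modEq_iff_dvd).mpr ⟨-1, by linear_combination key⟩)
  · exact h2 ((Int.modEq_iff_dvd).mpr ⟨1, by linear_combination -key⟩)
  · exact h2 ((Int.modEq_iff_dvd).mpr ⟨1, by linear_combination -key⟩)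
  · exact h1 ((Int.modEq_iff_dvd).mpr ⟨-1, by linear_combination key⟩)

/-- The quadratic has no rational root. -/
private lemma no_rat_root (a : ℕ) (ha : a.Prime) (p : ℤ)
    (h0 : ¬ (p ≡ 0 [ZMOD (a : ℤ)]))
    (h1 : ¬ (p ≡ -2 * (a : ℤ) + 1 [ZMOD ((a : ℤ) ^ 2)]))
    (h2 : ¬ (p ≡ -2 * (a : ℤ) - 1 [ZMOD ((a : ℤ) ^ 2)]))
    (x : ℚ) : x^2 - ((2*(a:ℚ)+(p:ℚ))/(a:ℚ))*x + 1 ≠ 0 := by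
  intro hx
  have h0' : ¬ (a:ℤ) ∣ p := fun h => h0 (Int.modEq_zero_iff_dvd.mpr h)
  have ha0 : (a:ℚ) ≠ 0 := by exact_mod_cast ha.ne_zero
  have hAprime : Prime (a:ℤ) := Nat.prime_iff_prime_int.mp ha
  set u : ℤ := x.num with hu
  set v : ℤ := (x.den : ℤ) with hv
  have hv0 : (v:ℚ) ≠ 0 := by
    rw [hv]
    exact_mod_cast x.den_nz
  have hxuv : x = (u:ℚ)/(v:ℚ) := by
    rw [hu, hv]
    exact_mod_cast (Rat.num_div_den x).symm
  rw [hxuv] at hx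
  have heq : (a:ℤ)*u^2 - (2*a+p)*u*v + (a:ℤ)*v^2 = 0 := by
    have hQv : (v:ℚ) * ((a:ℚ)*(u:ℚ)^2 - (2*(a:ℚ)+(p:ℚ))*(u:ℚ)*(v:ℚ) + (a:ℚ)*(v:ℚ)^2) = 0 := by
      field_simp at hx
      linear_combination (v:ℚ) * hx
    have hQ := (mul_eq_zero.mp hQv).resolve_left hv0
    exact_mod_cast hQ
  have hcop : IsCoprime u v := by
    rw [Int.isCoprime_iff_gcd_eq_one]
    simpa [Int.gcd, hu, hv] using x.reduced
  have hdvd : (a:ℤ) ∣ p*u*v := ⟨u^2 + v^2 - 2*u*v, by linear_combination -heq⟩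
  rcases hAprime.dvd_mul.mp hdvd with hd | hdv
  · rcases hAprime.dvd_mul.mp hd with hd' | hdu
    · exact h0' hd'
    · exact int_no_sol a ha p u v h1 h2 hcop hdu heq
  · refine int_no_sol a ha p v u h1 h2 hcop.symm hdv ?_
    linear_combination heq

/-- A root of the quadratic in `ℚ_[a]` of norm `a`. -/
private lemma exists_padic_root (a : ℕ) [inst : Fact a.Prime] (p : ℤ) (h0 : ¬ (a:ℤ) ∣ p) :
    ∃ y : ℚ_[a], y^2 - (((2*(a:ℚ)+(p:ℚ))/(a:ℚ) : ℚ) : ℚ_[a]) * y + 1 = 0 ∧ ‖y‖ = a := by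
  have ha := inst.out
  have ha1 : (1:ℝ) < a := by exact_mod_cast ha.one_lt
  have haR0 : (0:ℝ) < a := lt_trans one_pos ha1
  set b : ℤ_[a] := ((2*(a:ℤ)+p : ℤ) : ℤ_[a]) with hb
  set cc : ℤ_[a] := (((a:ℤ)^2 : ℤ) : ℤ_[a]) with hcc
  set F : Polynomial ℤ_[a] := X^2 - C b * X + C cc with hF
  set pI : ℤ_[a] := ((p : ℤ) : ℤ_[a]) with hpI
  have hevalF : F.eval pI = (((a:ℤ) * ((a:ℤ) - 2*p) : ℤ) : ℤ_[a]) := by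
    rw [hF]
    simp only [eval_add, eval_sub, eval_mul, eval_pow, eval_X, eval_C, hb, hcc, hpI]
    push_cast
    ring
  have hderF : F.derivative.eval pI = (((p : ℤ) - 2*(a:ℤ) : ℤ) : ℤ_[a]) := by
    rw [hF]
    simp [hb, hpI]
    push_cast
    ring
  have hnormder : ‖F.derivative.eval pI‖ = 1 := by
    rw [hderF]
    refine le_antisymm (PadicInt.norm_le_one _) ?_
    by_contra hlt
    push_neg at hlt
    have h' : ((a:ℕ):ℤ) ∣ (p - 2*(a:ℤ)) := (PadicInt.norm_int_lt_one_iff_dvd _).mp hlt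
    apply h0
    have h'' : (a:ℤ) ∣ (p - 2*(a:ℤ)) + 2*(a:ℤ) := dvd_add (by exact_mod_cast h') ⟨2, by ring⟩
    simpa using h''
  have hsplit : (((a:ℤ) * ((a:ℤ) - 2*p) : ℤ) : ℤ_[a])
      = ((a:ℕ) : ℤ_[a]) * (((a:ℤ) - 2*p : ℤ) : ℤ_[a]) := by push_cast; ring
  have hnormev : ‖F.eval pI‖ ≤ (a:ℝ)⁻¹ := by
    rw [hevalF, hsplit, norm_mul, PadicInt.norm_p]
    calc (a:ℝ)⁻¹ * ‖(((a:ℤ) - 2*p : ℤ) : ℤ_[a])‖ ≤ (a:ℝ)⁻¹ * 1 := by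
          gcongr
          exact PadicInt.norm_le_one _
      _ = (a:ℝ)⁻¹ := mul_one _
  have hhyp : ‖F.eval pI‖ < ‖F.derivative.eval pI‖^2 := by
    rw [hnormder, one_pow]
    exact lt_of_le_of_lt hnormev (inv_lt_one_of_one_lt₀ ha1)
  obtain ⟨z₀, hz₀, hz₀lt, -, -⟩ := hensels_lemma hhyp
  rw [coe_aeval_eq_eval] at hz₀ hz₀lt
  rw [hnormder] at hz₀lt
  have hpInorm : ‖pI‖ = 1 := by
    refine le_antisymm (PadicInt.norm_le_one _) ?_
    by_contra hlt
    push_neg at hlt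
    exact h0 (by exact_mod_cast (PadicInt.norm_int_lt_one_iff_dvd _).mp hlt)
  have hz₀norm : ‖z₀‖ = 1 := by
    refine le_antisymm (PadicInt.norm_le_one _) ?_
    by_contra hlt
    push_neg at hlt
    have hmax : ‖pI‖ ≤ max ‖z₀‖ ‖pI - z₀‖ := by
      simpa using PadicInt.nonarchimedean z₀ (pI - z₀)
    rw [hpInorm] at hmax
    rcases max_cases ‖z₀‖ ‖pI - z₀‖ with ⟨hm, _⟩ | ⟨hm, _⟩ <;> rw [hm] at hmax
    · linarith
    · rw [norm_sub_rev] at hmax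
      linarith
  refine ⟨(z₀ : ℚ_[a]) / ((a:ℕ) : ℚ_[a]), ?_, ?_⟩
  · have haQ : ((a:ℕ) : ℚ_[a]) ≠ 0 := Nat.cast_ne_zero.mpr ha.ne_zero
    have h5 : (z₀ : ℚ_[a])^2 - ((2*(a:ℤ)+p : ℤ) : ℚ_[a]) * (z₀ : ℚ_[a]) + (((a:ℤ)^2 : ℤ) : ℚ_[a]) = 0 := by
      have h6 : ((F.eval z₀ : ℤ_[a]) : ℚ_[a]) = 0 := by rw [hz₀]; simp
      rw [hF] at h6
      simp only [eval_add, eval_sub, eval_mul, eval_pow, eval_X, eval_C, hb, hcc] at h6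
      push_cast [PadicInt.coe_intCast, show ((2:ℤ_[a]):ℚ_[a]) = 2 from rfl] at h6 ⊢
      linear_combination h6
    have hcast : (((2*(a:ℚ)+(p:ℚ))/(a:ℚ) : ℚ) : ℚ_[a]) =
        (2*((a:ℕ):ℚ_[a]) + ((p:ℤ):ℚ_[a])) / ((a:ℕ):ℚ_[a]) := by
      push_cast
      ring
    rw [hcast]
    field_simp
    push_cast at h5
    linear_combination h5
  · have hcz : ‖(z₀ : ℚ_[a])‖ = 1 := by
      rw [PadicInt.padic_norm_e_of_padicInt]; exact hz₀norm
    rw [norm_div, hcz, Padic.norm_p, one_div, inv_inv]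

open IntermediateField in
set_option maxHeartbeats 1000000 in
/-- The key lemma: any `x` with `x ^ n = z ^ m`, `gcd m n = 1`, is reciprocal. -/
private lemma reciprocal_of_pow (a : ℕ) (ha : a.Prime) (p : ℤ)
    (h0 : ¬ (p ≡ 0 [ZMOD (a : ℤ)]))
    (h1 : ¬ (p ≡ -2 * (a : ℤ) + 1 [ZMOD ((a : ℤ) ^ 2)]))
    (h2 : ¬ (p ≡ -2 * (a : ℤ) - 1 [ZMOD ((a : ℤ) ^ 2)]))
    (z : ℂ) (hz : (a : ℂ) * z ^ 2 - (2 * (a : ℂ) + (p : ℂ)) * z + (a : ℂ) = 0)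
    (x : ℂ) (m n : ℕ) (hm : 0 < m) (hn : 0 < n) (hmn : Nat.Coprime m n)
    (hx : x ^ n = z ^ m) : IsReciprocalNum x := by
  haveI : Fact a.Prime := ⟨ha⟩
  have h0' : ¬ (a:ℤ) ∣ p := fun h => h0 (Int.modEq_zero_iff_dvd.mpr h)
  have ha0C : (a:ℂ) ≠ 0 := by exact_mod_cast ha.ne_zero
  have haR1 : (1:ℝ) < a := by exact_mod_cast ha.one_lt
  have haR0 : (0:ℝ) < a := lt_trans one_pos haR1
  have hz0 : z ≠ 0 := by
    intro h; rw [h] at hz; simp at hz; exact ha0C (by exact_mod_cast hz)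
  have hzm0 : z ^ m ≠ 0 := pow_ne_zero _ hz0
  have hx0 : x ≠ 0 := by
    intro h
    rw [h, zero_pow hn.ne'] at hx
    exact hzm0 hx.symm
  set s : ℚ := (2*(a:ℚ)+(p:ℚ))/(a:ℚ) with hs
  have hsC : ((s:ℚ):ℂ) = (2*(a:ℂ)+(p:ℂ))/(a:ℂ) := by rw [hs]; push_cast; ring
  have hzs : z^2 - (s:ℂ)*z + 1 = 0 := by
    rw [hsC]; field_simp; linear_combination hz
  set q : ℚ[X] := X^2 - C s * X + C 1 with hq
  have hqmonic : q.Monic := by rw [hq]; monicity!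
  have hqdeg : q.natDegree = 2 := by rw [hq]; compute_degree!
  have hqroots : q.roots = 0 := by
    refine Multiset.eq_zero_of_forall_notMem (fun r hr => ?_)
    have hr' : q.eval r = 0 := (mem_roots hqmonic.ne_zero).mp hr
    rw [hq] at hr'
    simp only [eval_add, eval_sub, eval_mul, eval_pow, eval_X, eval_C] at hr'
    exact no_rat_root a ha p h0 h1 h2 r (by rw [← hs]; linear_combination hr')
  have hqirr : Irreducible q :=
    (irreducible_iff_roots_eq_zero_of_degree_le_three (by rw [hqdeg]) (by rw [hqdeg]; omega)).mpr
      hqroots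
  have haevalq : aeval z q = 0 := by
    rw [hq]
    simp only [map_add, map_sub, map_mul, map_pow, aeval_X, aeval_C, map_one]
    rw [show (algebraMap ℚ ℂ) s = ((s:ℚ):ℂ) from eq_ratCast _ s]
    linear_combination hzs
  have hzint : IsIntegral ℚ z := ⟨q, hqmonic, by rwa [aeval_def] at haevalq⟩
  have hqmin : minpoly ℚ z = q := (minpoly.eq_of_irreducible_of_monic hqirr haevalq hqmonic).symm
  obtain ⟨y, hy', hynorm⟩ := exists_padic_root a p h0'
  have hy : y^2 - (s : ℚ_[a]) * y + 1 = 0 := by rw [hs]; exact hy'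
  have hy0 : y ≠ 0 := by
    intro h; rw [h, norm_zero] at hynorm; exact (ne_of_gt haR0) hynorm.symm
  set pb := IntermediateField.adjoin.powerBasis hzint with hpb
  have hpbgen : minpoly ℚ pb.gen = q := by
    rw [hpb, IntermediateField.adjoin.powerBasis_gen]
    exact (IntermediateField.minpoly_gen (F := ℚ) (α := z)).trans hqmin
  have hyq : aeval y (minpoly ℚ pb.gen) = 0 := by
    rw [hpbgen, hq]
    simp only [map_add, map_sub, map_mul, map_pow, aeval_X, aeval_C, map_one]
    rw [show (algebraMap ℚ ℚ_[a]) s = (s : ℚ_[a]) from eq_ratCast _ s]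
    linear_combination hy
  set ψ := pb.lift y hyq with hψ
  have hψgen : ψ (IntermediateField.AdjoinSimple.gen ℚ z) = y :=
    pb.lift_gen y hyq
  have hinvq : aeval z⁻¹ (minpoly ℚ pb.gen) = 0 := by
    rw [hpbgen, hq]
    simp only [map_add, map_sub, map_mul, map_pow, aeval_X, aeval_C, map_one]
    rw [show (algebraMap ℚ ℂ) s = ((s:ℚ):ℂ) from eq_ratCast _ s]
    field_simp
    linear_combination hzs
  set τ := pb.lift z⁻¹ hinvq with hτ
  have hτgen : τ (IntermediateField.AdjoinSimple.gen ℚ z) = z⁻¹ :=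
    pb.lift_gen z⁻¹ hinvq
  set zK := IntermediateField.AdjoinSimple.gen ℚ z with hzK
  have hzKC : (algebraMap ℚ⟮z⟯ ℂ) zK = z := IntermediateField.AdjoinSimple.algebraMap_gen ℚ z
  set θ := zK ^ m with hθ
  have hθC : (algebraMap ℚ⟮z⟯ ℂ) θ = z ^ m := by rw [hθ, map_pow, hzKC]
  set S : ℚ := chb s m with hS
  have hzsum : z + z⁻¹ = (s:ℂ) := by
    field_simp
    linear_combination hzs
  have hSC : ((S:ℚ):ℂ) = z^m + (z^m)⁻¹ := by
    rw [hS, chb_spec s z hz0 hzsum m]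
  set G : ℚ[X] := X^(2*n) - C S * X^n + C 1 with hG
  have hGmonic : G.Monic := by
    rw [hG]; monicity! <;>
      simp [show ¬ 2*n ≤ n by omega, show ¬ 2*n = n by omega, hn.ne', show n ≤ 2*n by omega]
  have hGdeg : G.natDegree = 2*n := by
    rw [hG]; compute_degree! <;>
      simp [show ¬ 2*n ≤ n by omega, show ¬ 2*n = n by omega, hn.ne', show n ≤ 2*n by omega]
  have haevalG : aeval x G = 0 := by
    rw [hG]
    simp only [map_add, map_sub, map_mul, map_pow, aeval_X, aeval_C, map_one]
    rw [show (algebraMap ℚ ℂ) S = ((S:ℚ):ℂ) from eq_ratCast _ S, hSC]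
    have hx2 : x^(2*n) = (z^m)^2 := by rw [mul_comm 2 n, pow_mul, hx]
    rw [hx2, hx]
    field_simp
    ring
  have hxint : IsIntegral ℚ x := ⟨G, hGmonic, by rwa [aeval_def] at haevalG⟩
  have hxKint : IsIntegral ℚ⟮z⟯ x := IsIntegral.tower_top hxint
  have haevalQK : aeval x ((X:Polynomial ℚ⟮z⟯)^n - C θ) = 0 := by
    simp only [map_sub, map_pow, aeval_X, aeval_C]
    rw [hθC, hx, sub_self]
  have hdvdQ : minpoly ℚ⟮z⟯ x ∣ (X:Polynomial ℚ⟮z⟯)^n - C θ := minpoly.dvd _ _ haevalQK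
  have hQne : ((X:Polynomial ℚ⟮z⟯)^n - C θ) ≠ 0 := X_pow_sub_C_ne_zero hn θ
  set d := (minpoly ℚ⟮z⟯ x).natDegree with hd
  have hdle : d ≤ n := by
    have h := natDegree_le_of_dvd hdvdQ hQne
    rwa [natDegree_X_pow_sub_C] at h
  haveI hfd : FiniteDimensional ℚ⟮z⟯ ℚ⟮z⟯⟮x⟯ := IntermediateField.adjoin.finiteDimensional hxKint
  set xE := IntermediateField.AdjoinSimple.gen ℚ⟮z⟯ x with hxE
  have hxEC : (algebraMap ℚ⟮z⟯⟮x⟯ ℂ) xE = x := IntermediateField.AdjoinSimple.algebraMap_gen _ x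
  have hgenpow : xE ^ n = algebraMap ℚ⟮z⟯ ℚ⟮z⟯⟮x⟯ θ := by
    apply (algebraMap ℚ⟮z⟯⟮x⟯ ℂ).injective
    rw [map_pow, hxEC, ← IsScalarTower.algebraMap_apply, hθC, hx]
  have hnormpow : (Algebra.norm ℚ⟮z⟯ xE)^n = θ ^ d := by
    rw [← map_pow, hgenpow, Algebra.norm_algebraMap, IntermediateField.adjoin.finrank hxKint]
  have hψθ : ψ θ = y ^ m := by rw [hθ, map_pow, hψgen]
  have hψnorm : (ψ (Algebra.norm ℚ⟮z⟯ xE))^n = y^(m*d) := by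
    rw [← map_pow, hnormpow, map_pow, hψθ, ← pow_mul]
  have hdpos : 0 < d := minpoly.natDegree_pos hxKint
  have hw0 : ψ (Algebra.norm ℚ⟮z⟯ xE) ≠ 0 := by
    intro h
    rw [h, zero_pow hn.ne'] at hψnorm
    exact hy0 ((pow_eq_zero_iff (by positivity : m*d ≠ 0)).mp hψnorm.symm)
  set t := (ψ (Algebra.norm ℚ⟮z⟯ xE)).valuation with ht
  have hnormw : ‖ψ (Algebra.norm ℚ⟮z⟯ xE)‖ = (a:ℝ) ^ (-t) := Padic.norm_eq_zpow_neg_valuation hw0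
  have hnorms : ((a:ℝ) ^ (-t))^n = (a:ℝ)^(m*d) := by
    rw [← hnormw, ← norm_pow, hψnorm, norm_pow, hynorm]
  have hexp : (a:ℝ) ^ ((-t) * (n:ℤ)) = (a:ℝ) ^ (((m*d : ℕ)) : ℤ) := by
    rw [zpow_mul, zpow_natCast, zpow_natCast]
    exact hnorms
  have hexp' : (-t) * (n:ℤ) = ((m*d : ℕ) : ℤ) := zpow_right_injective₀ haR0 haR1.ne' hexp
  have hndvd : (n:ℤ) ∣ ((m*d : ℕ) : ℤ) := ⟨-t, by linarith [hexp']⟩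
  have hndvdN : n ∣ m * d := by exact_mod_cast hndvd
  have hnd : n ∣ d := Nat.Coprime.dvd_of_dvd_mul_left hmn.symm hndvdN
  have hdn : d = n := le_antisymm hdle (Nat.le_of_dvd hdpos hnd)
  have hQmin : minpoly ℚ⟮z⟯ x = (X:Polynomial ℚ⟮z⟯)^n - C θ :=
    eq_of_monic_of_associated (minpoly.monic hxKint) (monic_X_pow_sub_C θ hn.ne')
      (associated_of_dvd_of_natDegree_le hdvdQ hQne (by rw [natDegree_X_pow_sub_C, ← hdn]))
  set P := minpoly ℚ x with hP
  have hPmonic : P.Monic := minpoly.monic hxint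
  have hKdvd : minpoly ℚ⟮z⟯ x ∣ P.map (algebraMap ℚ ℚ⟮z⟯) :=
    minpoly.dvd_map_of_isScalarTower ℚ _ x
  have hQ1 : (X:ℂ[X])^n - C (z^m) ∣ P.map (algebraMap ℚ ℂ) := by
    have h := Polynomial.map_dvd (algebraMap ℚ⟮z⟯ ℂ) hKdvd
    rw [hQmin, Polynomial.map_map, ← IsScalarTower.algebraMap_eq] at h
    simpa only [Polynomial.map_sub, Polynomial.map_pow, map_X, map_C, hθC] using h
  have hQ2 : (X:ℂ[X])^n - C ((z^m)⁻¹) ∣ P.map (algebraMap ℚ ℂ) := by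
    have h := Polynomial.map_dvd τ.toRingHom (hQmin ▸ hKdvd)
    rw [Polynomial.map_map,
      (Subsingleton.elim (τ.toRingHom.comp (algebraMap ℚ ↥ℚ⟮z⟯)) (algebraMap ℚ ℂ))] at h
    have hτθ : τ.toRingHom θ = (z^m)⁻¹ := by
      show τ θ = (z^m)⁻¹
      rw [hθ, map_pow, hτgen, inv_pow]
    simpa only [Polynomial.map_sub, Polynomial.map_pow, map_X, map_C, hτθ] using h
  have hzKpow : zK ^ (2*m) ≠ 1 := by
    intro h
    have h' := congrArg ψ h
    rw [map_pow, hψgen, map_one] at h'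
    have hnorm1 : ‖y^(2*m)‖ = 1 := by rw [h', norm_one]
    rw [norm_pow, hynorm] at hnorm1
    have hgt : (1:ℝ) < (a:ℝ)^(2*m) := one_lt_pow₀ haR1 (by positivity)
    linarith
  have hne : z^m ≠ (z^m)⁻¹ := by
    intro h
    apply hzKpow
    apply (algebraMap ℚ⟮z⟯ ℂ).injective
    rw [map_pow, hzKC, map_one]
    calc z^(2*m) = z^m * z^m := by rw [two_mul, pow_add]
    _ = 1 := by nth_rewrite 2 [h]; exact mul_inv_cancel₀ hzm0
  have hδ : z^m - (z^m)⁻¹ ≠ 0 := sub_ne_zero.mpr hne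
  have hcop : IsCoprime ((X:ℂ[X])^n - C (z^m)) ((X:ℂ[X])^n - C ((z^m)⁻¹)) := by
    refine ⟨-C (z^m - (z^m)⁻¹)⁻¹, C (z^m - (z^m)⁻¹)⁻¹, ?_⟩
    rw [show -C (z^m - (z^m)⁻¹)⁻¹ * ((X:ℂ[X])^n - C (z^m)) +
        C (z^m - (z^m)⁻¹)⁻¹ * ((X:ℂ[X])^n - C ((z^m)⁻¹)) =
        C (z^m - (z^m)⁻¹)⁻¹ * (C (z^m) - C ((z^m)⁻¹)) from by ring]
    rw [← C_sub, ← C_mul, inv_mul_cancel₀ hδ, C_1]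
  have hmuldvd := hcop.mul_dvd hQ1 hQ2
  have hPmap0 : P.map (algebraMap ℚ ℂ) ≠ 0 := (hPmonic.map _).ne_zero
  have hdegP : 2*n ≤ P.natDegree := by
    have hle := natDegree_le_of_dvd hmuldvd hPmap0
    rw [natDegree_mul (X_pow_sub_C_ne_zero hn _) (X_pow_sub_C_ne_zero hn _),
      natDegree_X_pow_sub_C, natDegree_X_pow_sub_C, hPmonic.natDegree_map] at hle
    omega
  have hPdvdG : P ∣ G := minpoly.dvd ℚ x haevalG
  have hPG : P = G := eq_of_monic_of_associated hPmonic hGmonic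
    (associated_of_dvd_of_natDegree_le hPdvdG hGmonic.ne_zero (by rw [hGdeg]; exact hdegP))
  have hGirr : Irreducible G := hPG ▸ minpoly.irreducible hxint
  have haevalGinv : aeval x⁻¹ G = 0 := by
    have hval : x^(2*n) - ((S:ℚ):ℂ) * x^n + 1 = 0 := by
      have h := haevalG
      rw [hG] at h
      simp only [map_add, map_sub, map_mul, map_pow, aeval_X, aeval_C, map_one] at h
      rwa [show (algebraMap ℚ ℂ) S = ((S:ℚ):ℂ) from eq_ratCast _ S] at h
    rw [hG]
    simp only [map_add, map_sub, map_mul, map_pow, aeval_X, aeval_C, map_one]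
    rw [show (algebraMap ℚ ℂ) S = ((S:ℚ):ℂ) from eq_ratCast _ S]
    rw [inv_pow, inv_pow]
    have hxn : x^n ≠ 0 := pow_ne_zero _ hx0
    have hx2n : x^(2*n) ≠ 0 := pow_ne_zero _ hx0
    have hxfact : x^(2*n) = x^n * x^n := by rw [two_mul, pow_add]
    field_simp
    linear_combination (x^n) * hval
  refine ⟨hx0, ⟨G, hGmonic.ne_zero, haevalG⟩, ?_⟩
  rw [← hP, hPG]
  exact minpoly.eq_of_irreducible_of_monic hGirr haevalGinv hGmonic

theorem exists_compatible_reciprocal_sequence_through_root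
    (a : ℕ) (ha : a.Prime) (p : ℤ)
    (h0 : ¬ (p ≡ 0 [ZMOD (a : ℤ)]))
    (h1 : ¬ (p ≡ -2 * (a : ℤ) + 1 [ZMOD ((a : ℤ) ^ 2)]))
    (h2 : ¬ (p ≡ -2 * (a : ℤ) - 1 [ZMOD ((a : ℤ) ^ 2)]))
    (z : ℂ) (hz : (a : ℂ) * z ^ 2 - (2 * (a : ℂ) + (p : ℂ)) * z + (a : ℂ) = 0)
    (c : ℕ+) :
    ∃ α : ℕ+ → ℂ, (∀ i, IsReciprocalNum (α i)) ∧
      (∀ r i : ℕ+, α (r * i) ^ (r : ℕ) = α i) ∧ α c = z := by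
  have ha0C : (a:ℂ) ≠ 0 := by exact_mod_cast ha.ne_zero
  have hz0 : z ≠ 0 := by
    intro h
    rw [h] at hz
    simp at hz
    exact ha0C (by exact_mod_cast hz)
  set w := Complex.log z with hw
  refine ⟨fun i => Complex.exp (((c:ℕ):ℂ) * w / (((i:ℕ):ℂ))), ?_, ?_, ?_⟩
  · intro i
    set g := Nat.gcd (c:ℕ) (i:ℕ) with hg
    have hg0 : 0 < g := Nat.gcd_pos_of_pos_left _ c.pos
    set m := (c:ℕ)/g with hm
    set n := (i:ℕ)/g with hn
    have hgc : g ∣ (c:ℕ) := Nat.gcd_dvd_left _ _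
    have hgi : g ∣ (i:ℕ) := Nat.gcd_dvd_right _ _
    have hmpos : 0 < m := Nat.div_pos (Nat.le_of_dvd c.pos hgc) hg0
    have hnpos : 0 < n := Nat.div_pos (Nat.le_of_dvd i.pos hgi) hg0
    have hco : Nat.Coprime m n := Nat.coprime_div_gcd_div_gcd hg0
    have hkey : (c:ℕ) * n = m * (i:ℕ) := by
      obtain ⟨c', hc'⟩ := hgc
      obtain ⟨i', hi'⟩ := hgi
      rw [hm, hn, hc', hi', Nat.mul_div_cancel_left _ hg0, Nat.mul_div_cancel_left _ hg0]
      ring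
    have hi0 : (((i:ℕ)):ℂ) ≠ 0 := by exact_mod_cast i.pos.ne'
    have hpow : Complex.exp (((c:ℕ):ℂ) * w / (((i:ℕ):ℂ))) ^ n = z ^ m := by
      rw [← Complex.exp_nat_mul]
      have hzm : z ^ m = Complex.exp ((m:ℂ) * w) := by
        rw [Complex.exp_nat_mul, hw, Complex.exp_log hz0]
      rw [hzm]
      congr 1
      have hcast : ((c:ℕ):ℂ) * (n:ℂ) = (m:ℂ) * ((i:ℕ):ℂ) := by exact_mod_cast hkey
      field_simp
      linear_combination w * hcast
    exact reciprocal_of_pow a ha p h0 h1 h2 z hz _ m n hmpos hnpos hco hpow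
  · intro r i
    rw [← Complex.exp_nat_mul]
    congr 1
    have hri : (((r*i : ℕ+) : ℕ) : ℂ) = ((r:ℕ):ℂ) * ((i:ℕ):ℂ) := by
      push_cast
      ring
    rw [hri]
    have hr0 : ((r:ℕ):ℂ) ≠ 0 := by exact_mod_cast r.pos.ne'
    have hi0 : ((i:ℕ):ℂ) ≠ 0 := by exact_mod_cast i.pos.ne'
    field_simp
  · have hc0 : ((c:ℕ):ℂ) ≠ 0 := by exact_mod_cast c.pos.ne'
    show Complex.exp (((c:ℕ):ℂ) * w / ((c:ℕ):ℂ)) = z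
    rw [mul_comm, mul_div_assoc, div_self hc0, mul_one, hw, Complex.exp_log hz0]
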